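/- Let (A,∘,[·,·]) be a Gel'fand-Dorfman bialgebra over K of codimension 1 in a vector space E. Define an equivalence relation ≡ on the set F(A) of GD flag datums by: (p,q,S,T,a1,k,η,D) ≡ (p',q',S',T',a1',k',η',D') if and only if p = p', q = q', η = η' and there exists a pair (a0,β) ∈ A × K* such that for all a ∈ A: (FD1) S(a) = a0∘a + βS'(a) − q(a)a0; (FD2) T(a) = a∘a0 + βT'(a) − p(a)a0; (FD3) a1 = a0∘a0 + βS'(a0) + βT'(a0) + β²a1' − k a0; (FD4) k = βk' + p(a0) + q(a0); (FD5) D(a) = βD'(a) + [a0,a] − η(a)a0. Then the map sending the ≡-class of (p,q,S,T,a1,k,η,D) to the equivalence class of the unified product GD(A, x | p,q,S,T,a1,k,η,D) is a bijection F(A)/≡ → Extd(E,A). -/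

import Mathlib

namespace GDExt

def IsNovikov {M : Type*} [AddCommGroup M] (mul : M → M → M) : Prop :=
  (∀ a b c, mul (mul a b) c - mul a (mul b c) = mul (mul b a) c - mul b (mul a c)) ∧
  ∀ a b c, mul (mul a b) c = mul (mul a c) b

def IsLieBracket {M : Type*} [AddCommGroup M] (br : M → M → M) : Prop :=
  (∀ a, br a a = 0) ∧ ∀ a b c, br a (br b c) = br (br a b) c + br b (br a c)

def IsGD {M : Type*} [AddCommGroup M] (mul br : M → M → M) : Prop :=
  IsNovikov mul ∧ IsLieBracket br ∧
  ∀ a b c, br a (mul b c) - br c (mul b a) + mul (br b a) c - mul (br b c) a - mul b (br a c) = 0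

variable {K : Type*} [Field K]
variable {A V : Type*} [AddCommGroup A] [Module K A] [AddCommGroup V] [Module K V]

/-- First component bilinear product of the unified product `A ♮ V`. -/
def uniMul (circ : A →ₗ[K] A →ₗ[K] A) (lA rA : A →ₗ[K] Module.End K V)
    (lV rV : V →ₗ[K] Module.End K A) (f : V →ₗ[K] V →ₗ[K] A)
    (st : V →ₗ[K] V →ₗ[K] V) : A × V → A × V → A × V :=
  fun p q =>
    (circ p.1 q.1 + lV p.2 q.1 + rV q.2 p.1 + f p.2 q.2,
     st p.2 q.2 + lA p.1 q.2 + rA q.1 p.2)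

/-- Bracket of the unified product `A ♮ V`. -/
def uniBr (brk : A →ₗ[K] A →ₗ[K] A) (tl : V →ₗ[K] A →ₗ[K] V) (tr : V →ₗ[K] A →ₗ[K] A)
    (hm : V →ₗ[K] V →ₗ[K] A) (vbr : V →ₗ[K] V →ₗ[K] V) : A × V → A × V → A × V :=
  fun p q =>
    (brk p.1 q.1 + tr p.2 q.1 - tr q.2 p.1 + hm p.2 q.2,
     vbr p.2 q.2 + tl p.2 q.1 - tl q.2 p.1)

end GDExt

namespace GDExt

variable (K : Type*) [Field K]
variable (A : Type*) [AddCommGroup A] [Module K A]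

/-- The data of a Gel'fand-Dorfman flag datum. -/
structure FlagData where
  p : A →ₗ[K] K
  q : A →ₗ[K] K
  S : A →ₗ[K] A
  T : A →ₗ[K] A
  a1 : A
  k : K
  eta : A →ₗ[K] K
  D : A →ₗ[K] A

variable {K A}

/-- Conditions (FN1)-(FN10), (TD1)-(TD2) and (GF1)-(GF6) for a GD flag datum of the
GD bialgebra `(A, circ, brk)`. -/
def IsFlagDatum (circ brk : A →ₗ[K] A →ₗ[K] A) (d : FlagData K A) : Prop :=
  -- (FN1)
  (∀ a b : A, d.p (circ a b) = d.p (circ b a)) ∧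
  (∀ a b : A, d.q (circ a b) = d.q a * d.q b) ∧
  -- (FN2)
  (∀ a b : A, d.S (circ a b) = circ (d.S a) b + circ a (d.S b) + (d.q a - d.p a) • d.S b
      + d.q b • d.T a - circ (d.T a) b) ∧
  -- (FN3)
  (∀ a b : A, d.T (circ a b) - d.T (circ b a)
      = d.p b • d.T a - d.p a • d.T b + circ a (d.T b) - circ b (d.T a)) ∧
  -- (FN4)
  (∀ a : A, d.T (d.T a) = d.T (d.S a) - d.S (d.T a) + circ a d.a1
      + (d.q a - 2 * d.p a) • d.a1 + d.k • d.T a) ∧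
  -- (FN5)
  (∀ a : A, d.p (d.S a) - d.p (d.T a) = d.q (d.T a) + d.k * (d.p a - d.q a)) ∧
  -- (FN6)
  (∀ a b : A, circ (d.S a) b + d.q a • d.S b = circ (d.S b) a + d.q b • d.S a) ∧
  -- (FN7)
  (∀ a b : A, d.T (circ a b) = circ (d.T a) b + d.p a • d.S b) ∧
  -- (FN8)
  (∀ a b : A, d.p (circ a b) = d.p a * d.q b) ∧
  -- (FN9)
  (∀ a : A, d.T (d.S a) = circ d.a1 a + d.k • d.S a - d.q a • d.a1) ∧
  -- (FN10)
  (∀ a : A, d.p (d.S a) = 0) ∧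
  -- (TD1)
  (∀ a b : A, d.eta (brk a b) = 0) ∧
  -- (TD2)
  (∀ a b : A, d.D (brk a b) = brk (d.D a) b + brk a (d.D b) + d.eta a • d.D b - d.eta b • d.D a) ∧
  -- (GF1)
  (∀ a b : A, brk a (d.T b) - d.p b • d.D a - d.D (circ b a) + d.T (brk b a)
      + circ (d.D b) a + d.eta b • d.S a + circ b (d.D a) + d.eta a • d.T b = 0) ∧
  -- (GF2)
  (∀ a b : A, d.p (brk b a) + d.eta b * d.q a - d.eta (circ b a) = 0) ∧
  -- (GF3)
  (∀ a b : A, brk a (d.S b) - d.q b • d.D a - brk b (d.S a) + d.q a • d.D b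
      + circ (d.D a) b + d.eta a • d.S b - circ (d.D b) a - d.eta b • d.S a
      - d.S (brk a b) = 0) ∧
  -- (GF4)
  (∀ a b : A, d.q (brk a b) = 0) ∧
  -- (GF5)
  (∀ a : A, brk a d.a1 - d.k • d.D a - d.D (d.S a) + d.T (d.D a)
      + (2 * d.eta a) • d.a1 + d.S (d.D a) = 0) ∧
  -- (GF6)
  (∀ a : A, d.k * d.eta a - d.eta (d.S a) + d.p (d.D a) + d.q (d.D a) = 0)

end GDExt

namespace GDExt

variable {K E : Type*} [Field K] [AddCommGroup E] [Module K E]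

/-- The GD bialgebra structures on `E` containing the GD bialgebra `(A, circ, brk)`
as a subalgebra (i.e. restricting to the given operations on `A`). -/
def GDStrOn (A : Submodule K E) (circ brk : ↥A →ₗ[K] ↥A →ₗ[K] ↥A) : Type _ :=
  {s : (E →ₗ[K] E →ₗ[K] E) × (E →ₗ[K] E →ₗ[K] E) //
    IsGD (fun u v => s.1 u v) (fun u v => s.2 u v) ∧
    ∀ a b : ↥A, s.1 a b = ((circ a b : ↥A) : E) ∧ s.2 a b = ((brk a b : ↥A) : E)}

/-- Equivalence of GD bialgebra structures on `E` containing `A` as a subalgebra: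
there is a GD bialgebra isomorphism whose restriction to `A` is the identity. -/
def GDStrEquiv (A : Submodule K E) (circ brk : ↥A →ₗ[K] ↥A →ₗ[K] ↥A)
    (s s' : GDStrOn A circ brk) : Prop :=
  ∃ φ : E ≃ₗ[K] E,
    (∀ u v : E, φ (s.1.1 u v) = s'.1.1 (φ u) (φ v)) ∧
    (∀ u v : E, φ (s.1.2 u v) = s'.1.2 (φ u) (φ v)) ∧
    (∀ a : ↥A, φ (a : E) = (a : E))

end GDExt

namespace GDExt

variable {K A : Type*} [Field K] [AddCommGroup A] [Module K A]

/-- The equivalence relation (FD1)-(FD5) on GD flag datums. -/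
def FlagRel (circ brk : A →ₗ[K] A →ₗ[K] A) (d d' : FlagData K A) : Prop :=
  d.p = d'.p ∧ d.q = d'.q ∧ d.eta = d'.eta ∧
  ∃ (a0 : A) (β : K), β ≠ 0 ∧
    -- (FD1)
    (∀ a : A, d.S a = circ a0 a + β • d'.S a - d.q a • a0) ∧
    -- (FD2)
    (∀ a : A, d.T a = circ a a0 + β • d'.T a - d.p a • a0) ∧
    -- (FD3)
    (d.a1 = circ a0 a0 + β • d'.S a0 + β • d'.T a0 + (β * β) • d'.a1 - d.k • a0) ∧
    -- (FD4)
    (d.k = β * d'.k + d.p a0 + d.q a0) ∧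
    -- (FD5)
    (∀ a : A, d.D a = β • d'.D a + brk a0 a - d.eta a • a0)

end GDExt

namespace GDExt

section Helpers

lemma smulc {K M : Type*} [Field K] [AddCommGroup M] [Module K M] (c : K) {x y : M} (h : x = y) :
    c • x = c • y := by rw [h]

lemma lc1 {M : Type*} [AddCommGroup M] {x1 y1 L R : M} (h1 : x1 = y1)
    (key : L + y1 = R + x1) : L = R := by rw [h1] at key; exact add_right_cancel key

lemma lc2 {M : Type*} [AddCommGroup M] {x1 y1 x2 y2 L R : M} (h1 : x1 = y1) (h2 : x2 = y2)
    (key : L + y1 + y2 = R + x1 + x2) : L = R := by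
  rw [h1, h2] at key; exact add_right_cancel (add_right_cancel key)

lemma lc3 {M : Type*} [AddCommGroup M] {x1 y1 x2 y2 x3 y3 L R : M}
    (h1 : x1 = y1) (h2 : x2 = y2) (h3 : x3 = y3)
    (key : L + y1 + y2 + y3 = R + x1 + x2 + x3) : L = R := by
  rw [h1, h2, h3] at key
  exact add_right_cancel (add_right_cancel (add_right_cancel key))

lemma lc4 {M : Type*} [AddCommGroup M] {x1 y1 x2 y2 x3 y3 x4 y4 L R : M}
    (h1 : x1 = y1) (h2 : x2 = y2) (h3 : x3 = y3) (h4 : x4 = y4)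
    (key : L + y1 + y2 + y3 + y4 = R + x1 + x2 + x3 + x4) : L = R := by
  rw [h1, h2, h3, h4] at key
  exact add_right_cancel (add_right_cancel (add_right_cancel (add_right_cancel key)))

lemma lc5 {M : Type*} [AddCommGroup M] {x1 y1 x2 y2 x3 y3 x4 y4 x5 y5 L R : M}
    (h1 : x1 = y1) (h2 : x2 = y2) (h3 : x3 = y3) (h4 : x4 = y4) (h5 : x5 = y5)
    (key : L + y1 + y2 + y3 + y4 + y5 = R + x1 + x2 + x3 + x4 + x5) : L = R := by
  rw [h1, h2, h3, h4, h5] at key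
  exact add_right_cancel (add_right_cancel (add_right_cancel (add_right_cancel
    (add_right_cancel key))))

lemma lc6 {M : Type*} [AddCommGroup M] {x1 y1 x2 y2 x3 y3 x4 y4 x5 y5 x6 y6 L R : M}
    (h1 : x1 = y1) (h2 : x2 = y2) (h3 : x3 = y3) (h4 : x4 = y4) (h5 : x5 = y5) (h6 : x6 = y6)
    (key : L + y1 + y2 + y3 + y4 + y5 + y6 = R + x1 + x2 + x3 + x4 + x5 + x6) : L = R := by
  rw [h1, h2, h3, h4, h5, h6] at key
  exact add_right_cancel (add_right_cancel (add_right_cancel (add_right_cancel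
    (add_right_cancel (add_right_cancel key)))))

end Helpers

section Core

variable {K : Type*} [Field K] {A : Type*} [AddCommGroup A] [Module K A]
variable (circ brk : A →ₗ[K] A →ₗ[K] A)

/-- unified product, first (A) and second (K) components, on A × K. -/
def fmul (d : FlagData K A) : A × K → A × K → A × K := fun u v =>
  (circ u.1 v.1 + u.2 • d.S v.1 + v.2 • d.T u.1 + (u.2 * v.2) • d.a1,
   u.2 * v.2 * d.k + v.2 * d.p u.1 + u.2 * d.q v.1)

def fbr (d : FlagData K A) : A × K → A × K → A × K := fun u v =>
  (brk u.1 v.1 + u.2 • d.D v.1 - v.2 • d.D u.1, u.2 * d.eta v.1 - v.2 * d.eta u.1)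

lemma brk_anti (halt : ∀ a, brk a a = 0) (a b : A) : brk a b = -brk b a := by
  have h := halt (a + b)
  simp only [map_add, LinearMap.add_apply, halt] at h
  have h2 : brk a b + brk b a = 0 := by rw [← h]; abel
  exact eq_neg_of_add_eq_zero_left h2

theorem isGD_fmul (d : FlagData K A)
    (hGD : IsGD (fun a b => circ a b) (fun a b => brk a b))
    (hd : IsFlagDatum circ brk d) :
    IsGD (fmul circ d) (fbr brk d) := by
  obtain ⟨⟨hN1, hN2⟩, ⟨hLalt, hLjac⟩, hC⟩ := hGD
  obtain ⟨hFN1a, hFN1b, hFN2, hFN3, hFN4, hFN5, hFN6, hFN7, hFN8, hFN9, hFN10,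
    hTD1, hTD2, hGF1, hGF2, hGF3, hGF4, hGF5, hGF6⟩ := hd
  refine ⟨⟨?_, ?_⟩, ⟨?_, ?_⟩, ?_⟩
  · -- Novikov left-symmetry
    rintro ⟨a, γ⟩ ⟨b, δ⟩ ⟨c, ε⟩
    simp only [fmul, map_add, map_smul, LinearMap.add_apply, LinearMap.smul_apply,
      smul_eq_mul, Prod.mk_sub_mk, Prod.mk.injEq]
    constructor
    · refine lc6 (hN1 a b c) (smulc (-γ) (hFN2 b c)) (smulc δ (hFN2 a c))
        (smulc ε (hFN3 a b)) (smulc (-(γ*ε)) (hFN4 b)) (smulc (δ*ε) (hFN4 a)) ?_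
      module
    · linear_combination ε * (hFN1a a b) - γ * (hFN1b b c) + δ * (hFN1b a c)
        + (γ*ε) * (hFN5 b) - (δ*ε) * (hFN5 a)
  · -- Novikov right-commutativity
    rintro ⟨a, γ⟩ ⟨b, δ⟩ ⟨c, ε⟩
    simp only [fmul, map_add, map_smul, LinearMap.add_apply, LinearMap.smul_apply,
      smul_eq_mul, Prod.mk.injEq]
    constructor
    · refine lc6 (hN2 a b c) (smulc γ (hFN6 b c)) (smulc (-δ) (hFN7 a c)) (smulc ε (hFN7 a b))
        (smulc (-(γ*δ)) (hFN9 c)) (smulc (γ*ε) (hFN9 b)) ?_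
      module
    · linear_combination ε * (hFN8 a b) - δ * (hFN8 a c) + (γ*ε) * (hFN10 b) - (γ*δ) * (hFN10 c)
  · -- alternating
    rintro ⟨a, γ⟩
    have h : brk a a = 0 := hLalt a
    simp only [fbr, h, Prod.mk_eq_zero]
    constructor
    · abel
    · ring
  · -- Jacobi
    rintro ⟨a, γ⟩ ⟨b, δ⟩ ⟨c, ε⟩
    simp only [fbr, map_add, map_smul, map_sub, LinearMap.add_apply, LinearMap.smul_apply,
      LinearMap.sub_apply, smul_eq_mul, smul_sub, Prod.mk_add_mk, Prod.mk.injEq]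
    constructor
    · refine lc5 (hLjac a b c) (smulc γ (hTD2 b c)) (smulc (-δ) (hTD2 a c)) (smulc ε (hTD2 a b))
        (smulc ε (brk_anti brk hLalt b (d.D a))) ?_
      module
    · linear_combination γ * (hTD1 b c) - δ * (hTD1 a c) + ε * (hTD1 a b)
  · -- compatibility
    rintro ⟨a, γ⟩ ⟨b, δ⟩ ⟨c, ε⟩
    simp only [fmul, fbr, map_add, map_smul, map_sub, LinearMap.add_apply, LinearMap.smul_apply,
      LinearMap.sub_apply, smul_eq_mul, smul_sub, Prod.mk_add_mk, Prod.mk_sub_mk,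
      Prod.mk.injEq, Prod.mk_eq_zero]
    constructor
    · refine lc6 (hC a b c) (smulc (-γ) (hGF1 c b)) (smulc δ (hGF3 a c)) (smulc ε (hGF1 a b))
        (smulc (-(γ*δ)) (hGF5 c)) (smulc (δ*ε) (hGF5 a)) ?_
      module
    · linear_combination (-γ) * (hGF2 c b) + ε * (hGF2 a b) - δ * (hGF4 a c)
        - (γ*δ) * (hGF6 c) + (δ*ε) * (hGF6 a)

theorem isFlagDatum_of_isGD (d : FlagData K A)
    (h : IsGD (fmul circ d) (fbr brk d)) : IsFlagDatum circ brk d := by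
  obtain ⟨⟨hN1, hN2⟩, ⟨hLalt, hLjac⟩, hC⟩ := h
  refine ⟨?_, ?_, ?_, ?_, ?_, ?_, ?_, ?_, ?_, ?_, ?_, ?_, ?_, ?_, ?_, ?_, ?_, ?_, ?_⟩
  · -- FN1a
    intro a b
    have h := hN1 (a,0) (b,0) (0,1)
    simp only [fmul, fbr, map_zero, map_add, map_smul, map_neg, LinearMap.add_apply,
      LinearMap.smul_apply, LinearMap.zero_apply, LinearMap.neg_apply, smul_eq_mul, zero_smul,
      smul_zero, one_smul, neg_smul, smul_neg, mul_zero, zero_mul, mul_one, one_mul, mul_neg,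
      neg_mul, add_zero, zero_add, sub_zero, zero_sub, neg_neg, Prod.mk.injEq, Prod.mk_sub_mk,
      Prod.mk_add_mk, Prod.mk_eq_zero] at h
    linear_combination h.2
  · -- FN1b
    intro a b
    have h := hN1 (a,0) (0,1) (b,0)
    simp only [fmul, fbr, map_zero, map_add, map_smul, map_neg, LinearMap.add_apply,
      LinearMap.smul_apply, LinearMap.zero_apply, LinearMap.neg_apply, smul_eq_mul, zero_smul,
      smul_zero, one_smul, neg_smul, smul_neg, mul_zero, zero_mul, mul_one, one_mul, mul_neg,
      neg_mul, add_zero, zero_add, sub_zero, zero_sub, neg_neg, Prod.mk.injEq, Prod.mk_sub_mk,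
      Prod.mk_add_mk, Prod.mk_eq_zero] at h
    linear_combination h.2
  · -- FN2
    intro a b
    have h := hN1 (a,0) (0,1) (b,0)
    simp only [fmul, fbr, map_zero, map_add, map_smul, map_neg, LinearMap.add_apply,
      LinearMap.smul_apply, LinearMap.zero_apply, LinearMap.neg_apply, smul_eq_mul, zero_smul,
      smul_zero, one_smul, neg_smul, smul_neg, mul_zero, zero_mul, mul_one, one_mul, mul_neg,
      neg_mul, add_zero, zero_add, sub_zero, zero_sub, neg_neg, Prod.mk.injEq, Prod.mk_sub_mk,
      Prod.mk_add_mk, Prod.mk_eq_zero] at h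
    refine lc1 h.1 ?_; module
  · -- FN3
    intro a b
    have h := hN1 (a,0) (b,0) (0,1)
    simp only [fmul, fbr, map_zero, map_add, map_smul, map_neg, LinearMap.add_apply,
      LinearMap.smul_apply, LinearMap.zero_apply, LinearMap.neg_apply, smul_eq_mul, zero_smul,
      smul_zero, one_smul, neg_smul, smul_neg, mul_zero, zero_mul, mul_one, one_mul, mul_neg,
      neg_mul, add_zero, zero_add, sub_zero, zero_sub, neg_neg, Prod.mk.injEq, Prod.mk_sub_mk,
      Prod.mk_add_mk, Prod.mk_eq_zero] at h
    refine lc1 h.1 ?_; module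
  · -- FN4
    intro a
    have h := hN1 (a,0) (0,1) (0,1)
    simp only [fmul, fbr, map_zero, map_add, map_smul, map_neg, LinearMap.add_apply,
      LinearMap.smul_apply, LinearMap.zero_apply, LinearMap.neg_apply, smul_eq_mul, zero_smul,
      smul_zero, one_smul, neg_smul, smul_neg, mul_zero, zero_mul, mul_one, one_mul, mul_neg,
      neg_mul, add_zero, zero_add, sub_zero, zero_sub, neg_neg, Prod.mk.injEq, Prod.mk_sub_mk,
      Prod.mk_add_mk, Prod.mk_eq_zero] at h
    refine lc1 h.1 ?_; module
  · -- FN5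
    intro a
    have h := hN1 (a,0) (0,1) (0,1)
    simp only [fmul, fbr, map_zero, map_add, map_smul, map_neg, LinearMap.add_apply,
      LinearMap.smul_apply, LinearMap.zero_apply, LinearMap.neg_apply, smul_eq_mul, zero_smul,
      smul_zero, one_smul, neg_smul, smul_neg, mul_zero, zero_mul, mul_one, one_mul, mul_neg,
      neg_mul, add_zero, zero_add, sub_zero, zero_sub, neg_neg, Prod.mk.injEq, Prod.mk_sub_mk,
      Prod.mk_add_mk, Prod.mk_eq_zero] at h
    linear_combination -h.2
  · -- FN6
    intro a b
    have h := hN2 (0,1) (a,0) (b,0)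
    simp only [fmul, fbr, map_zero, map_add, map_smul, map_neg, LinearMap.add_apply,
      LinearMap.smul_apply, LinearMap.zero_apply, LinearMap.neg_apply, smul_eq_mul, zero_smul,
      smul_zero, one_smul, neg_smul, smul_neg, mul_zero, zero_mul, mul_one, one_mul, mul_neg,
      neg_mul, add_zero, zero_add, sub_zero, zero_sub, neg_neg, Prod.mk.injEq, Prod.mk_sub_mk,
      Prod.mk_add_mk, Prod.mk_eq_zero] at h
    refine lc1 h.1 ?_; module
  · -- FN7
    intro a b
    have h := hN2 (a,0) (b,0) (0,1)
    simp only [fmul, fbr, map_zero, map_add, map_smul, map_neg, LinearMap.add_apply,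
      LinearMap.smul_apply, LinearMap.zero_apply, LinearMap.neg_apply, smul_eq_mul, zero_smul,
      smul_zero, one_smul, neg_smul, smul_neg, mul_zero, zero_mul, mul_one, one_mul, mul_neg,
      neg_mul, add_zero, zero_add, sub_zero, zero_sub, neg_neg, Prod.mk.injEq, Prod.mk_sub_mk,
      Prod.mk_add_mk, Prod.mk_eq_zero] at h
    refine lc1 h.1 ?_; module
  · -- FN8
    intro a b
    have h := hN2 (a,0) (b,0) (0,1)
    simp only [fmul, fbr, map_zero, map_add, map_smul, map_neg, LinearMap.add_apply,
      LinearMap.smul_apply, LinearMap.zero_apply, LinearMap.neg_apply, smul_eq_mul, zero_smul,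
      smul_zero, one_smul, neg_smul, smul_neg, mul_zero, zero_mul, mul_one, one_mul, mul_neg,
      neg_mul, add_zero, zero_add, sub_zero, zero_sub, neg_neg, Prod.mk.injEq, Prod.mk_sub_mk,
      Prod.mk_add_mk, Prod.mk_eq_zero] at h
    linear_combination h.2
  · -- FN9
    intro a
    have h := hN2 (0,1) (a,0) (0,1)
    simp only [fmul, fbr, map_zero, map_add, map_smul, map_neg, LinearMap.add_apply,
      LinearMap.smul_apply, LinearMap.zero_apply, LinearMap.neg_apply, smul_eq_mul, zero_smul,
      smul_zero, one_smul, neg_smul, smul_neg, mul_zero, zero_mul, mul_one, one_mul, mul_neg,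
      neg_mul, add_zero, zero_add, sub_zero, zero_sub, neg_neg, Prod.mk.injEq, Prod.mk_sub_mk,
      Prod.mk_add_mk, Prod.mk_eq_zero] at h
    refine lc1 h.1 ?_; module
  · -- FN10
    intro a
    have h := hN2 (0,1) (a,0) (0,1)
    simp only [fmul, fbr, map_zero, map_add, map_smul, map_neg, LinearMap.add_apply,
      LinearMap.smul_apply, LinearMap.zero_apply, LinearMap.neg_apply, smul_eq_mul, zero_smul,
      smul_zero, one_smul, neg_smul, smul_neg, mul_zero, zero_mul, mul_one, one_mul, mul_neg,
      neg_mul, add_zero, zero_add, sub_zero, zero_sub, neg_neg, Prod.mk.injEq, Prod.mk_sub_mk,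
      Prod.mk_add_mk, Prod.mk_eq_zero] at h
    linear_combination h.2
  · -- TD1
    intro a b
    have h := hLjac (0,1) (a,0) (b,0)
    simp only [fmul, fbr, map_zero, map_add, map_smul, map_neg, LinearMap.add_apply,
      LinearMap.smul_apply, LinearMap.zero_apply, LinearMap.neg_apply, smul_eq_mul, zero_smul,
      smul_zero, one_smul, neg_smul, smul_neg, mul_zero, zero_mul, mul_one, one_mul, mul_neg,
      neg_mul, add_zero, zero_add, sub_zero, zero_sub, neg_neg, Prod.mk.injEq, Prod.mk_sub_mk,
      Prod.mk_add_mk, Prod.mk_eq_zero] at h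
    linear_combination h.2
  · -- TD2
    intro a b
    have h := hLjac (0,1) (a,0) (b,0)
    simp only [fmul, fbr, map_zero, map_add, map_smul, map_neg, LinearMap.add_apply,
      LinearMap.smul_apply, LinearMap.zero_apply, LinearMap.neg_apply, smul_eq_mul, zero_smul,
      smul_zero, one_smul, neg_smul, smul_neg, mul_zero, zero_mul, mul_one, one_mul, mul_neg,
      neg_mul, add_zero, zero_add, sub_zero, zero_sub, neg_neg, Prod.mk.injEq, Prod.mk_sub_mk,
      Prod.mk_add_mk, Prod.mk_eq_zero] at h
    refine lc1 h.1 ?_; module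
  · -- GF1
    intro a b
    have h := hC (a,0) (b,0) (0,1)
    simp only [fmul, fbr, map_zero, map_add, map_smul, map_neg, LinearMap.add_apply,
      LinearMap.smul_apply, LinearMap.zero_apply, LinearMap.neg_apply, smul_eq_mul, zero_smul,
      smul_zero, one_smul, neg_smul, smul_neg, mul_zero, zero_mul, mul_one, one_mul, mul_neg,
      neg_mul, add_zero, zero_add, sub_zero, zero_sub, neg_neg, Prod.mk.injEq, Prod.mk_sub_mk,
      Prod.mk_add_mk, Prod.mk_eq_zero] at h
    refine lc1 h.1 ?_; module
  · -- GF2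
    intro a b
    have h := hC (a,0) (b,0) (0,1)
    simp only [fmul, fbr, map_zero, map_add, map_smul, map_neg, LinearMap.add_apply,
      LinearMap.smul_apply, LinearMap.zero_apply, LinearMap.neg_apply, smul_eq_mul, zero_smul,
      smul_zero, one_smul, neg_smul, smul_neg, mul_zero, zero_mul, mul_one, one_mul, mul_neg,
      neg_mul, add_zero, zero_add, sub_zero, zero_sub, neg_neg, Prod.mk.injEq, Prod.mk_sub_mk,
      Prod.mk_add_mk, Prod.mk_eq_zero] at h
    linear_combination h.2
  · -- GF3
    intro a b
    have h := hC (a,0) (0,1) (b,0)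
    simp only [fmul, fbr, map_zero, map_add, map_smul, map_neg, LinearMap.add_apply,
      LinearMap.smul_apply, LinearMap.zero_apply, LinearMap.neg_apply, smul_eq_mul, zero_smul,
      smul_zero, one_smul, neg_smul, smul_neg, mul_zero, zero_mul, mul_one, one_mul, mul_neg,
      neg_mul, add_zero, zero_add, sub_zero, zero_sub, neg_neg, Prod.mk.injEq, Prod.mk_sub_mk,
      Prod.mk_add_mk, Prod.mk_eq_zero] at h
    refine lc1 h.1 ?_; module
  · -- GF4
    intro a b
    have h := hC (a,0) (0,1) (b,0)
    simp only [fmul, fbr, map_zero, map_add, map_smul, map_neg, LinearMap.add_apply,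
      LinearMap.smul_apply, LinearMap.zero_apply, LinearMap.neg_apply, smul_eq_mul, zero_smul,
      smul_zero, one_smul, neg_smul, smul_neg, mul_zero, zero_mul, mul_one, one_mul, mul_neg,
      neg_mul, add_zero, zero_add, sub_zero, zero_sub, neg_neg, Prod.mk.injEq, Prod.mk_sub_mk,
      Prod.mk_add_mk, Prod.mk_eq_zero] at h
    linear_combination -h.2
  · -- GF5
    intro a
    have h := hC (a,0) (0,1) (0,1)
    simp only [fmul, fbr, map_zero, map_add, map_smul, map_neg, LinearMap.add_apply,
      LinearMap.smul_apply, LinearMap.zero_apply, LinearMap.neg_apply, smul_eq_mul, zero_smul,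
      smul_zero, one_smul, neg_smul, smul_neg, mul_zero, zero_mul, mul_one, one_mul, mul_neg,
      neg_mul, add_zero, zero_add, sub_zero, zero_sub, neg_neg, Prod.mk.injEq, Prod.mk_sub_mk,
      Prod.mk_add_mk, Prod.mk_eq_zero] at h
    refine lc1 h.1 ?_; module
  · -- GF6
    intro a
    have h := hC (a,0) (0,1) (0,1)
    simp only [fmul, fbr, map_zero, map_add, map_smul, map_neg, LinearMap.add_apply,
      LinearMap.smul_apply, LinearMap.zero_apply, LinearMap.neg_apply, smul_eq_mul, zero_smul,
      smul_zero, one_smul, neg_smul, smul_neg, mul_zero, zero_mul, mul_one, one_mul, mul_neg,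
      neg_mul, add_zero, zero_add, sub_zero, zero_sub, neg_neg, Prod.mk.injEq, Prod.mk_sub_mk,
      Prod.mk_add_mk, Prod.mk_eq_zero] at h
    linear_combination h.2

/-- The linear automorphism of `A × K` determined by `(a0, β)`. -/
def psiEquiv (a0 : A) (β : K) (hβ : β ≠ 0) : (A × K) ≃ₗ[K] (A × K) where
  toFun u := (u.1 + u.2 • a0, u.2 * β)
  invFun u := (u.1 - (u.2 * β⁻¹) • a0, u.2 * β⁻¹)
  map_add' u v := by
    refine Prod.ext ?_ ?_
    · show u.1 + v.1 + (u.2 + v.2) • a0 = u.1 + u.2 • a0 + (v.1 + v.2 • a0)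
      rw [add_smul]; abel
    · show (u.2 + v.2) * β = u.2 * β + v.2 * β
      ring
  map_smul' c u := by
    refine Prod.ext ?_ ?_
    · show c • u.1 + (c • u.2) • a0 = c • (u.1 + u.2 • a0)
      rw [smul_add, smul_smul, smul_eq_mul, ← smul_smul]
    · show (c • u.2) * β = c • (u.2 * β)
      simp [smul_eq_mul]; ring
  left_inv u := by
    refine Prod.ext ?_ ?_ <;>
      simp [mul_assoc, mul_inv_cancel₀ hβ, inv_mul_cancel₀ hβ]
  right_inv u := by
    refine Prod.ext ?_ ?_ <;>
      simp [mul_assoc, mul_inv_cancel₀ hβ, inv_mul_cancel₀ hβ]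

lemma psiEquiv_apply (a0 : A) (β : K) (hβ : β ≠ 0) (a : A) (γ : K) :
    psiEquiv a0 β hβ (a, γ) = (a + γ • a0, γ * β) := rfl

theorem psi_hom_of_flagRel (d d' : FlagData K A) (halt : ∀ a : A, brk a a = 0)
    (h : FlagRel circ brk d d') :
    ∃ (a0 : A) (β : K) (hβ : β ≠ 0),
      (∀ u v, psiEquiv a0 β hβ (fmul circ d u v)
          = fmul circ d' (psiEquiv a0 β hβ u) (psiEquiv a0 β hβ v)) ∧
      (∀ u v, psiEquiv a0 β hβ (fbr brk d u v)
          = fbr brk d' (psiEquiv a0 β hβ u) (psiEquiv a0 β hβ v)) := by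
  obtain ⟨hp, hq, he, a0, β, hβ, hFD1, hFD2, hFD3, hFD4, hFD5⟩ := h
  refine ⟨a0, β, hβ, ?_, ?_⟩
  · rintro ⟨a, γ⟩ ⟨b, δ⟩
    simp only [fmul, psiEquiv_apply, map_add, map_smul, LinearMap.add_apply,
      LinearMap.smul_apply, smul_eq_mul, Prod.mk.injEq, ← hp, ← hq]
    constructor
    · refine lc3 (smulc γ (hFD1 b)) (smulc δ (hFD2 a)) (smulc (γ*δ) hFD3) ?_
      module
    · linear_combination (γ*δ*β) * hFD4
  · rintro ⟨a, γ⟩ ⟨b, δ⟩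
    simp only [fbr, psiEquiv_apply, map_add, map_smul, map_sub, LinearMap.add_apply,
      LinearMap.smul_apply, LinearMap.sub_apply, smul_eq_mul, smul_sub,
      Prod.mk.injEq, ← hp, ← hq, ← he]
    constructor
    · refine lc4 (smulc γ (hFD5 b)) (smulc (-δ) (hFD5 a))
        (smulc (-δ) (brk_anti brk halt a a0)) (smulc (-(γ*δ)) (halt a0)) ?_
      module
    · ring

theorem flagRel_of_psi (d d' : FlagData K A) (ψ : (A × K) ≃ₗ[K] (A × K))
    (hA : ∀ a : A, ψ (a, 0) = (a, 0))
    (hm : ∀ u v, ψ (fmul circ d u v) = fmul circ d' (ψ u) (ψ v))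
    (hb : ∀ u v, ψ (fbr brk d u v) = fbr brk d' (ψ u) (ψ v)) :
    FlagRel circ brk d d' := by
  set a0 : A := (ψ (0, 1)).1 with ha0
  set β : K := (ψ (0, 1)).2 with hβdef
  have hψX : ψ (0, 1) = (a0, β) := rfl
  have hpsi : ∀ (a : A) (γ : K), ψ (a, γ) = (a + γ • a0, γ * β) := by
    intro a γ
    have hdec : ((a, γ) : A × K) = (a, 0) + γ • ((0 : A), (1 : K)) := by
      refine Prod.ext ?_ ?_ <;> simp
    rw [hdec, map_add, map_smul, hA, hψX]
    refine Prod.ext ?_ ?_ <;> simp [smul_eq_mul]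
  have hβ : β ≠ 0 := by
    intro h0
    have h1 : ψ (0, 1) = ψ (a0, 0) := by rw [hA, hψX, h0]
    have h2 := ψ.injective h1
    have h3 : (1 : K) = 0 := congrArg Prod.snd h2
    exact one_ne_zero h3
  have key : ∀ a : A, ψ (fmul circ d (a,0) (0,1)) = fmul circ d' (ψ (a,0)) (ψ (0,1)) :=
    fun a => hm _ _
  -- p = p' and FD2
  have hTa : ∀ a : A, (d.T a + d.p a • a0, d.p a * β)
      = (circ a a0 + β • d'.T a, β * d'.p a) := by
    intro a
    have h := hm (a,0) (0,1)
    simp only [fmul, hpsi, map_add, map_smul, LinearMap.add_apply, LinearMap.smul_apply,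
      smul_eq_mul, map_zero, LinearMap.zero_apply, zero_smul, smul_zero, one_smul, mul_zero,
      zero_mul, mul_one, one_mul, add_zero, zero_add] at h
    exact h
  have hp : d.p = d'.p := by
    ext a
    have h2 := congrArg Prod.snd (hTa a)
    simp only at h2
    have : β * d.p a = β * d'.p a := by linear_combination h2
    exact mul_left_cancel₀ hβ this
  have hSb : ∀ b : A, (d.S b + d.q b • a0, d.q b * β)
      = (circ a0 b + β • d'.S b, β * d'.q b) := by
    intro b
    have h := hm (0,1) (b,0)
    simp only [fmul, hpsi, map_add, map_smul, LinearMap.add_apply, LinearMap.smul_apply,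
      smul_eq_mul, map_zero, LinearMap.zero_apply, zero_smul, smul_zero, one_smul, mul_zero,
      zero_mul, mul_one, one_mul, add_zero, zero_add] at h
    exact h
  have hq : d.q = d'.q := by
    ext b
    have h2 := congrArg Prod.snd (hSb b)
    simp only at h2
    have : β * d.q b = β * d'.q b := by linear_combination h2
    exact mul_left_cancel₀ hβ this
  have hDb : ∀ b : A, (d.D b + d.eta b • a0, d.eta b * β)
      = (brk a0 b + β • d'.D b, β * d'.eta b) := by
    intro b
    have h := hb (0,1) (b,0)
    simp only [fbr, hpsi, map_add, map_smul, map_sub, LinearMap.add_apply, LinearMap.smul_apply,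
      LinearMap.sub_apply, smul_eq_mul, map_zero, LinearMap.zero_apply, zero_smul, smul_zero,
      one_smul, mul_zero, zero_mul, mul_one, one_mul, add_zero, zero_add, sub_zero] at h
    exact h
  have he : d.eta = d'.eta := by
    ext b
    have h2 := congrArg Prod.snd (hDb b)
    simp only at h2
    have : β * d.eta b = β * d'.eta b := by linear_combination h2
    exact mul_left_cancel₀ hβ this
  have hXX : (d.a1 + d.k • a0, d.k * β)
      = (circ a0 a0 + β • d'.S a0 + β • d'.T a0 + (β * β) • d'.a1,
         β * β * d'.k + β * d'.p a0 + β * d'.q a0) := by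
    have h := hm (0,1) (0,1)
    simp only [fmul, hpsi, map_add, map_smul, LinearMap.add_apply, LinearMap.smul_apply,
      smul_eq_mul, map_zero, LinearMap.zero_apply, zero_smul, smul_zero, one_smul, mul_zero,
      zero_mul, mul_one, one_mul, add_zero, zero_add, smul_smul] at h
    convert h using 2
  refine ⟨hp, hq, he, a0, β, hβ, ?_, ?_, ?_, ?_, ?_⟩
  · intro b
    have h1 := congrArg Prod.fst (hSb b)
    simp only at h1
    refine lc1 h1 ?_; module
  · intro a
    have h1 := congrArg Prod.fst (hTa a)
    simp only at h1
    refine lc1 h1 ?_; module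
  · have h1 := congrArg Prod.fst hXX
    simp only at h1
    refine lc1 h1 ?_; module
  · have h2 := congrArg Prod.snd hXX
    simp only at h2
    rw [hp, hq]
    have : β * d.k = β * (β * d'.k + d'.p a0 + d'.q a0) := by linear_combination h2
    exact mul_left_cancel₀ hβ this
  · intro b
    have h1 := congrArg Prod.fst (hDb b)
    simp only at h1
    refine lc1 h1 ?_; module

def fmulL (d : FlagData K A) : (A × K) →ₗ[K] (A × K) →ₗ[K] (A × K) :=
  LinearMap.mk₂ K (fmul circ d)
    (fun u u' v => by
      refine Prod.ext ?_ ?_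
      · simp only [fmul, Prod.fst_add, Prod.snd_add, map_add, LinearMap.add_apply]
        module
      · simp only [fmul, Prod.fst_add, Prod.snd_add, map_add]
        ring)
    (fun c u v => by
      refine Prod.ext ?_ ?_
      · simp only [fmul, Prod.smul_fst, Prod.smul_snd, map_smul, LinearMap.smul_apply,
          smul_eq_mul]
        module
      · simp only [fmul, Prod.smul_fst, Prod.smul_snd, map_smul, smul_eq_mul]
        ring)
    (fun u v v' => by
      refine Prod.ext ?_ ?_
      · simp only [fmul, Prod.fst_add, Prod.snd_add, map_add, LinearMap.add_apply]
        module
      · simp only [fmul, Prod.fst_add, Prod.snd_add, map_add]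
        ring)
    (fun c u v => by
      refine Prod.ext ?_ ?_
      · simp only [fmul, Prod.smul_fst, Prod.smul_snd, map_smul, LinearMap.smul_apply,
          smul_eq_mul]
        module
      · simp only [fmul, Prod.smul_fst, Prod.smul_snd, map_smul, smul_eq_mul]
        ring)

def fbrL (d : FlagData K A) : (A × K) →ₗ[K] (A × K) →ₗ[K] (A × K) :=
  LinearMap.mk₂ K (fbr brk d)
    (fun u u' v => by
      refine Prod.ext ?_ ?_
      · simp only [fbr, Prod.fst_add, Prod.snd_add, map_add, LinearMap.add_apply]
        module
      · simp only [fbr, Prod.fst_add, Prod.snd_add, map_add]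
        ring)
    (fun c u v => by
      refine Prod.ext ?_ ?_
      · simp only [fbr, Prod.smul_fst, Prod.smul_snd, map_smul, LinearMap.smul_apply,
          smul_eq_mul]
        module
      · simp only [fbr, Prod.smul_fst, Prod.smul_snd, map_smul, smul_eq_mul]
        ring)
    (fun u v v' => by
      refine Prod.ext ?_ ?_
      · simp only [fbr, Prod.fst_add, Prod.snd_add, map_add, LinearMap.add_apply]
        module
      · simp only [fbr, Prod.fst_add, Prod.snd_add, map_add]
        ring)
    (fun c u v => by
      refine Prod.ext ?_ ?_
      · simp only [fbr, Prod.smul_fst, Prod.smul_snd, map_smul, LinearMap.smul_apply,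
          smul_eq_mul]
        module
      · simp only [fbr, Prod.smul_fst, Prod.smul_snd, map_smul, smul_eq_mul]
        ring)

@[simp] lemma fmulL_apply (d : FlagData K A) (u v : A × K) :
    fmulL circ d u v = fmul circ d u v := rfl

@[simp] lemma fbrL_apply (d : FlagData K A) (u v : A × K) :
    fbrL brk d u v = fbr brk d u v := rfl

end Core

section Conj

variable {K : Type*} [Field K]

theorem isGD_conj {M N : Type*} [AddCommGroup M] [Module K M] [AddCommGroup N] [Module K N]
    (f : M ≃ₗ[K] N) (mul br : N → N → N) (h : IsGD mul br) :
    IsGD (fun u v => f.symm (mul (f u) (f v))) (fun u v => f.symm (br (f u) (f v))) := by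
  obtain ⟨⟨h1, h2⟩, ⟨h3, h4⟩, h5⟩ := h
  refine ⟨⟨?_, ?_⟩, ⟨?_, ?_⟩, ?_⟩
  · intro a b c
    apply f.injective
    simp only [map_sub, LinearEquiv.apply_symm_apply]
    exact h1 (f a) (f b) (f c)
  · intro a b c
    apply f.injective
    simp only [LinearEquiv.apply_symm_apply]
    exact h2 (f a) (f b) (f c)
  · intro a
    apply f.injective
    simp only [LinearEquiv.apply_symm_apply, map_zero]
    exact h3 (f a)
  · intro a b c
    apply f.injective
    simp only [map_add, LinearEquiv.apply_symm_apply]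
    exact h4 (f a) (f b) (f c)
  · intro a b c
    apply f.injective
    simp only [map_sub, map_add, map_zero, LinearEquiv.apply_symm_apply]
    exact h5 (f a) (f b) (f c)

end Conj

section ELayer

variable {K E : Type*} [Field K] [AddCommGroup E] [Module K E]

theorem gdStrEquiv_equivalence (A : Submodule K E) (circ brk : ↥A →ₗ[K] ↥A →ₗ[K] ↥A) :
    Equivalence (GDStrEquiv A circ brk) := by
  constructor
  · intro s
    exact ⟨LinearEquiv.refl K E, by simp, by simp, by simp⟩
  · rintro s s' ⟨φ, hm, hb, hA⟩
    refine ⟨φ.symm, ?_, ?_, ?_⟩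
    · intro u v
      apply φ.injective
      rw [hm]
      simp only [LinearEquiv.apply_symm_apply]
    · intro u v
      apply φ.injective
      rw [hb]
      simp only [LinearEquiv.apply_symm_apply]
    · intro a
      have h2 := congrArg φ.symm (hA a)
      rw [φ.symm_apply_apply] at h2
      exact h2.symm
  · rintro s s' s'' ⟨φ, hm, hb, hA⟩ ⟨ψ, hm', hb', hA'⟩
    refine ⟨φ.trans ψ, ?_, ?_, ?_⟩
    · intro u v
      simp only [LinearEquiv.trans_apply, hm, hm']
    · intro u v
      simp only [LinearEquiv.trans_apply, hb, hb']
    · intro a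
      simp only [LinearEquiv.trans_apply, hA, hA']

variable {A' : Type*} [AddCommGroup A'] [Module K A']

/-- Transport of a bilinear operation on `A' × K` to `E` along `ee`. -/
def opGen (ee : E ≃ₗ[K] A' × K) (m : (A' × K) →ₗ[K] (A' × K) →ₗ[K] (A' × K)) :
    E →ₗ[K] E →ₗ[K] E :=
  LinearMap.mk₂ K (fun u v => ee.symm (m (ee u) (ee v)))
    (fun u u' v => by simp only [map_add, LinearMap.add_apply])
    (fun c u v => by simp only [map_smul, LinearMap.smul_apply])
    (fun u v v' => by simp only [map_add, LinearMap.add_apply])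
    (fun c u v => by simp only [map_smul, LinearMap.smul_apply])

@[simp] lemma opGen_apply (ee : E ≃ₗ[K] A' × K) (m : (A' × K) →ₗ[K] (A' × K) →ₗ[K] (A' × K))
    (u v : E) : opGen ee m u v = ee.symm (m (ee u) (ee v)) := rfl

def opGenInv (ee : E ≃ₗ[K] A' × K) (m : E →ₗ[K] E →ₗ[K] E) :
    (A' × K) →ₗ[K] (A' × K) →ₗ[K] (A' × K) :=
  LinearMap.mk₂ K (fun u v => ee (m (ee.symm u) (ee.symm v)))
    (fun u u' v => by simp only [map_add, LinearMap.add_apply])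
    (fun c u v => by simp only [map_smul, LinearMap.smul_apply])
    (fun u v v' => by simp only [map_add, LinearMap.add_apply])
    (fun c u v => by simp only [map_smul, LinearMap.smul_apply])

@[simp] lemma opGenInv_apply (ee : E ≃ₗ[K] A' × K) (m : E →ₗ[K] E →ₗ[K] E)
    (u v : A' × K) : opGenInv ee m u v = ee (m (ee.symm u) (ee.symm v)) := rfl

end ELayer

end GDExt

namespace GDExt

set_option maxHeartbeats 1000000 in
/-- Theorem 4.3: for `A` of codimension 1 in `E`, `F(A)/≡ → Extd(E,A)`,
sending the class of a flag datum to the class of the associated unified product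
`GD(A, x | p,q,S,T,a1,k,η,D)`, is a bijection. -/
theorem flag_quotient_bijective_extd
    {K E : Type*} [Field K] [AddCommGroup E] [Module K E]
    (A : Submodule K E) (x : E) (hx : x ∉ A) (hc : IsCompl A (K ∙ x))
    (circ brk : ↥A →ₗ[K] ↥A →ₗ[K] ↥A)
    (hGD : IsGD (fun a b => circ a b) (fun a b => brk a b)) :
    ∃ G : Quot (fun d d' : {d : FlagData K ↥A // IsFlagDatum circ brk d} =>
            FlagRel circ brk d.1 d'.1)
        → Quot (GDStrEquiv A circ brk),
      Function.Bijective G ∧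
      ∀ (d : {d : FlagData K ↥A // IsFlagDatum circ brk d}) (s : GDStrOn A circ brk),
        (∀ (a b : ↥A) (γ δ : K),
          s.1.1 ((a : E) + γ • x) ((b : E) + δ • x)
            = ((circ a b : ↥A) : E) + γ • ((d.1.S b : ↥A) : E) + δ • ((d.1.T a : ↥A) : E)
              + (γ * δ) • ((d.1.a1 : ↥A) : E)
              + (γ * δ * d.1.k + δ * d.1.p a + γ * d.1.q b) • x ∧
          s.1.2 ((a : E) + γ • x) ((b : E) + δ • x)
            = ((brk a b : ↥A) : E) + γ • ((d.1.D b : ↥A) : E) - δ • ((d.1.D a : ↥A) : E)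
              + (γ * d.1.eta b - δ * d.1.eta a) • x) →
        G (Quot.mk _ d) = Quot.mk _ s := by
  classical
  have hx0 : x ≠ 0 := fun h => hx (h ▸ A.zero_mem)
  set e1 : (↥A × ↥(K ∙ x)) ≃ₗ[K] E := Submodule.prodEquivOfIsCompl A (K ∙ x) hc with he1
  set e2 : K ≃ₗ[K] ↥(K ∙ x) := LinearEquiv.toSpanNonzeroSingleton K E x hx0 with he2
  set ee : E ≃ₗ[K] ↥A × K := e1.symm.trans ((LinearEquiv.refl K ↥A).prodCongr e2.symm) with hee
  have hsym : ∀ (a : ↥A) (γ : K), ee.symm (a, γ) = (a : E) + γ • x := by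
    intro a γ
    show e1 (((LinearEquiv.refl K ↥A).prodCongr e2.symm).symm (a, γ)) = (a : E) + γ • x
    rw [LinearEquiv.prodCongr_symm, LinearEquiv.prodCongr_apply]
    simp only [LinearEquiv.refl_symm, LinearEquiv.refl_apply, LinearEquiv.symm_symm]
    have h5 : ⇑e1 = ⇑(A.subtype.coprod (K ∙ x).subtype) := by
      rw [he1, ← Submodule.coe_prodEquivOfIsCompl A (K ∙ x) hc]; rfl
    rw [h5]
    simp [he2, LinearEquiv.toSpanNonzeroSingleton_apply]
  have heeA : ∀ a : ↥A, ee (a : E) = (a, 0) := by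
    intro a
    have h := hsym a 0
    simp only [zero_smul, add_zero] at h
    rw [← h, ee.apply_symm_apply]
  have hseeA : ∀ c : ↥A, ee.symm ((c : ↥A), (0:K)) = (c : E) := by
    intro c
    rw [hsym]; simp
  have heeSym : ∀ u : E, (((ee u).1 : E) + (ee u).2 • x) = u := by
    intro u
    have h := hsym (ee u).1 (ee u).2
    rw [← h]
    exact ee.symm_apply_apply u
  have halt : ∀ a : ↥A, brk a a = 0 := hGD.2.1.1
  -- the structure associated to a flag datum
  let F : {d : FlagData K ↥A // IsFlagDatum circ brk d} → GDStrOn A circ brk := fun d =>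
    ⟨(opGen ee (fmulL circ d.1), opGen ee (fbrL brk d.1)), by
      have hP : IsGD (fmul circ d.1) (fbr brk d.1) := isGD_fmul circ brk d.1 hGD d.2
      constructor
      · have h6 := isGD_conj ee (fmul circ d.1) (fbr brk d.1) hP
        simpa only [opGen_apply, fmulL_apply, fbrL_apply] using h6
      · intro a b
        constructor
        · rw [show (opGen ee (fmulL circ d.1)) (a : E) (b : E)
              = ee.symm (fmulL circ d.1 (ee (a : E)) (ee (b : E))) from opGen_apply ..]
          rw [heeA, heeA, fmulL_apply]
          have h1 : fmul circ d.1 ((a : ↥A), (0:K)) (b, 0) = (circ a b, 0) := by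
            refine Prod.ext ?_ ?_ <;> simp [fmul]
          rw [h1, hseeA]
        · rw [show (opGen ee (fbrL brk d.1)) (a : E) (b : E)
              = ee.symm (fbrL brk d.1 (ee (a : E)) (ee (b : E))) from opGen_apply ..]
          rw [heeA, heeA, fbrL_apply]
          have h1 : fbr brk d.1 ((a : ↥A), (0:K)) (b, 0) = (brk a b, 0) := by
            refine Prod.ext ?_ ?_ <;> simp [fbr]
          rw [h1, hseeA]⟩
  have hFmul : ∀ (d : {d : FlagData K ↥A // IsFlagDatum circ brk d}) (u v : E),
      (F d).1.1 u v = ee.symm (fmul circ d.1 (ee u) (ee v)) := fun d u v => rfl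
  have hFbr : ∀ (d : {d : FlagData K ↥A // IsFlagDatum circ brk d}) (u v : E),
      (F d).1.2 u v = ee.symm (fbr brk d.1 (ee u) (ee v)) := fun d u v => rfl
  -- well-definedness
  have hwd : ∀ d d' : {d : FlagData K ↥A // IsFlagDatum circ brk d},
      FlagRel circ brk d.1 d'.1 → GDStrEquiv A circ brk (F d) (F d') := by
    intro d d' hr
    obtain ⟨a0, β, hβ, hm, hb⟩ := psi_hom_of_flagRel circ brk d.1 d'.1 halt hr
    refine ⟨ee.trans ((psiEquiv a0 β hβ).trans ee.symm), ?_, ?_, ?_⟩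
    · intro u v
      show ee.symm (psiEquiv a0 β hβ (ee ((F d).1.1 u v)))
        = (F d').1.1 (ee.symm (psiEquiv a0 β hβ (ee u))) (ee.symm (psiEquiv a0 β hβ (ee v)))
      rw [hFmul, hFmul, ee.apply_symm_apply, ee.apply_symm_apply, ee.apply_symm_apply, hm]
    · intro u v
      show ee.symm (psiEquiv a0 β hβ (ee ((F d).1.2 u v)))
        = (F d').1.2 (ee.symm (psiEquiv a0 β hβ (ee u))) (ee.symm (psiEquiv a0 β hβ (ee v)))
      rw [hFbr, hFbr, ee.apply_symm_apply, ee.apply_symm_apply, ee.apply_symm_apply, hb]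
    · intro a
      show ee.symm (psiEquiv a0 β hβ (ee (a : E))) = (a : E)
      rw [heeA, psiEquiv_apply]
      simp only [zero_smul, add_zero, zero_mul]
      exact hseeA a
  let G : Quot (fun d d' : {d : FlagData K ↥A // IsFlagDatum circ brk d} =>
          FlagRel circ brk d.1 d'.1) → Quot (GDStrEquiv A circ brk) :=
    Quot.lift (fun d => Quot.mk _ (F d)) (fun d d' hr => Quot.sound (hwd d d' hr))
  have hG : ∀ d, G (Quot.mk _ d) = Quot.mk _ (F d) := fun d => rfl
  -- the key identification lemma used for surjectivity and compatibility
  have hkey : ∀ s : GDStrOn A circ brk, ∃ ds : {d : FlagData K ↥A // IsFlagDatum circ brk d},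
      F ds = s := by
    intro s
    set M' : (↥A × K) →ₗ[K] (↥A × K) →ₗ[K] (↥A × K) := opGenInv ee s.1.1 with hM'
    set B' : (↥A × K) →ₗ[K] (↥A × K) →ₗ[K] (↥A × K) := opGenInv ee s.1.2 with hB'
    let dS : FlagData K ↥A := {
      p := LinearMap.snd K ↥A K ∘ₗ M'.flip (0,1) ∘ₗ LinearMap.inl K ↥A K
      q := LinearMap.snd K ↥A K ∘ₗ M' (0,1) ∘ₗ LinearMap.inl K ↥A K
      S := LinearMap.fst K ↥A K ∘ₗ M' (0,1) ∘ₗ LinearMap.inl K ↥A K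
      T := LinearMap.fst K ↥A K ∘ₗ M'.flip (0,1) ∘ₗ LinearMap.inl K ↥A K
      a1 := (M' (0,1) (0,1)).1
      k := (M' (0,1) (0,1)).2
      eta := LinearMap.snd K ↥A K ∘ₗ B' (0,1) ∘ₗ LinearMap.inl K ↥A K
      D := LinearMap.fst K ↥A K ∘ₗ B' (0,1) ∘ₗ LinearMap.inl K ↥A K }
    have hT : ∀ a : ↥A, M' ((a, 0) : ↥A × K) (0,1) = (dS.T a, dS.p a) := by
      intro a
      refine Prod.ext ?_ ?_ <;>
        simp only [dS, LinearMap.coe_comp, Function.comp_apply, LinearMap.inl_apply,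
          LinearMap.flip_apply, LinearMap.fst_apply, LinearMap.snd_apply]
    have hSq : ∀ b : ↥A, M' ((0,1) : ↥A × K) (b,0) = (dS.S b, dS.q b) := by
      intro b
      refine Prod.ext ?_ ?_ <;>
        simp only [dS, LinearMap.coe_comp, Function.comp_apply, LinearMap.inl_apply,
          LinearMap.fst_apply, LinearMap.snd_apply]
    have hXX : M' ((0,1) : ↥A × K) (0,1) = (dS.a1, dS.k) := by
      refine Prod.ext ?_ ?_ <;> rfl
    have hD : ∀ b : ↥A, B' ((0,1) : ↥A × K) (b,0) = (dS.D b, dS.eta b) := by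
      intro b
      refine Prod.ext ?_ ?_ <;>
        simp only [dS, LinearMap.coe_comp, Function.comp_apply, LinearMap.inl_apply,
          LinearMap.fst_apply, LinearMap.snd_apply]
    have hres : ∀ a b : ↥A, M' ((a,0) : ↥A × K) (b,0) = (circ a b, 0) := by
      intro a b
      show ee (s.1.1 (ee.symm (a,0)) (ee.symm (b,0))) = _
      rw [hseeA, hseeA, (s.2.2 a b).1, heeA]
    have hresB : ∀ a b : ↥A, B' ((a,0) : ↥A × K) (b,0) = (brk a b, 0) := by
      intro a b
      show ee (s.1.2 (ee.symm (a,0)) (ee.symm (b,0))) = _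
      rw [hseeA, hseeA, (s.2.2 a b).2, heeA]
    have haltB : ∀ u : ↥A × K, B' u u = 0 := by
      intro u
      show ee (s.1.2 (ee.symm u) (ee.symm u)) = 0
      have h0 : s.1.2 (ee.symm u) (ee.symm u) = 0 := s.2.1.2.1.1 (ee.symm u)
      rw [h0, map_zero]
    have hdecP : ∀ z : ↥A × K, z = ((z.1, (0:K)) : ↥A × K) + z.2 • ((0 : ↥A), (1:K)) := by
      intro z; refine Prod.ext ?_ ?_ <;> simp
    have hMeq : ∀ u v, M' u v = fmul circ dS u v := by
      intro u v
      conv_lhs => rw [hdecP u, hdecP v]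
      simp only [map_add, map_smul, LinearMap.add_apply, LinearMap.smul_apply, smul_add]
      rw [hres, hT, hSq, hXX]
      refine Prod.ext ?_ ?_
      · simp only [fmul, Prod.fst_add, Prod.smul_fst, smul_smul]
        module
      · simp only [fmul, Prod.snd_add, Prod.smul_snd, smul_eq_mul]
        ring
    have hBeq : ∀ u v, B' u v = fbr brk dS u v := by
      intro u v
      conv_lhs => rw [hdecP u, hdecP v]
      simp only [map_add, map_smul, LinearMap.add_apply, LinearMap.smul_apply, smul_add]
      rw [hresB, hD, brk_anti B' haltB ((u.1, (0:K)) : ↥A × K) ((0,1) : ↥A × K), hD, haltB]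
      refine Prod.ext ?_ ?_
      · simp only [fbr, Prod.fst_add, Prod.smul_fst, Prod.fst_neg, smul_smul, smul_zero,
          Prod.fst_zero, smul_neg]
        module
      · simp only [fbr, Prod.snd_add, Prod.smul_snd, Prod.snd_neg, smul_eq_mul, smul_zero,
          Prod.snd_zero, mul_neg, mul_zero]
        ring
    have hgdP : IsGD (fmul circ dS) (fbr brk dS) := by
      have h1 := isGD_conj ee.symm (fun u v => s.1.1 u v) (fun u v => s.1.2 u v) s.2.1
      have e3 : (fun u v => ee.symm.symm ((fun u v => s.1.1 u v) (ee.symm u) (ee.symm v)))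
          = fmul circ dS := by
        funext u v
        have h2 : ee.symm.symm ((fun u v => s.1.1 u v) (ee.symm u) (ee.symm v)) = M' u v := by
          rw [LinearEquiv.symm_symm]; rfl
        rw [h2, hMeq]
      have e4 : (fun u v => ee.symm.symm ((fun u v => s.1.2 u v) (ee.symm u) (ee.symm v)))
          = fbr brk dS := by
        funext u v
        have h2 : ee.symm.symm ((fun u v => s.1.2 u v) (ee.symm u) (ee.symm v)) = B' u v := by
          rw [LinearEquiv.symm_symm]; rfl
        rw [h2, hBeq]
      rw [e3, e4] at h1
      exact h1
    refine ⟨⟨dS, isFlagDatum_of_isGD circ brk dS hgdP⟩, ?_⟩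
    apply Subtype.ext
    refine Prod.ext ?_ ?_
    · refine LinearMap.ext fun u => LinearMap.ext fun v => ?_
      show ee.symm (fmulL circ dS (ee u) (ee v)) = s.1.1 u v
      rw [fmulL_apply, ← hMeq]
      show ee.symm (ee (s.1.1 (ee.symm (ee u)) (ee.symm (ee v)))) = _
      rw [ee.symm_apply_apply, ee.symm_apply_apply, ee.symm_apply_apply]
    · refine LinearMap.ext fun u => LinearMap.ext fun v => ?_
      show ee.symm (fbrL brk dS (ee u) (ee v)) = s.1.2 u v
      rw [fbrL_apply, ← hBeq]
      show ee.symm (ee (s.1.2 (ee.symm (ee u)) (ee.symm (ee v)))) = _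
      rw [ee.symm_apply_apply, ee.symm_apply_apply, ee.symm_apply_apply]
  refine ⟨G, ⟨?_, ?_⟩, ?_⟩
  · -- injective
    intro c1 c2
    refine Quot.inductionOn c1 (fun d => Quot.inductionOn c2 (fun d' h => ?_))
    have h1 : Quot.mk (GDStrEquiv A circ brk) (F d) = Quot.mk _ (F d') := h
    have h2 : GDStrEquiv A circ brk (F d) (F d') :=
      ((gdStrEquiv_equivalence A circ brk).eqvGen_iff).mp (Quot.eq.mp h1)
    obtain ⟨φ, hm, hb, hA⟩ := h2
    apply Quot.sound
    refine flagRel_of_psi circ brk d.1 d'.1 (ee.symm.trans (φ.trans ee)) ?_ ?_ ?_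
    · intro a
      show ee (φ (ee.symm ((a : ↥A), (0:K)))) = (a, 0)
      rw [hseeA, hA, heeA]
    · intro u v
      show ee (φ (ee.symm (fmul circ d.1 u v)))
        = fmul circ d'.1 (ee (φ (ee.symm u))) (ee (φ (ee.symm v)))
      have h4 : ee.symm (fmul circ d.1 u v) = (F d).1.1 (ee.symm u) (ee.symm v) := by
        rw [hFmul, ee.apply_symm_apply, ee.apply_symm_apply]
      rw [h4, hm, hFmul, ee.apply_symm_apply]
    · intro u v
      show ee (φ (ee.symm (fbr brk d.1 u v)))
        = fbr brk d'.1 (ee (φ (ee.symm u))) (ee (φ (ee.symm v)))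
      have h4 : ee.symm (fbr brk d.1 u v) = (F d).1.2 (ee.symm u) (ee.symm v) := by
        rw [hFbr, ee.apply_symm_apply, ee.apply_symm_apply]
      rw [h4, hb, hFbr, ee.apply_symm_apply]
  · -- surjective
    intro c
    refine Quot.inductionOn c (fun s => ?_)
    obtain ⟨ds, hds⟩ := hkey s
    exact ⟨Quot.mk _ ds, by rw [hG, hds]⟩
  · -- compatibility
    intro d s hsub
    rw [hG]
    have hFs : F d = s := by
      apply Subtype.ext
      refine Prod.ext ?_ ?_
      · refine LinearMap.ext fun u => LinearMap.ext fun v => ?_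
        rw [hFmul]
        have hu := (heeSym u).symm
        have hv := (heeSym v).symm
        have h := (hsub (ee u).1 (ee v).1 (ee u).2 (ee v).2).1
        rw [← hu, ← hv] at h
        rw [h]
        have h5 : fmul circ d.1 (ee u) (ee v)
            = (circ (ee u).1 (ee v).1 + (ee u).2 • d.1.S (ee v).1 + (ee v).2 • d.1.T (ee u).1
                + ((ee u).2 * (ee v).2) • d.1.a1,
               (ee u).2 * (ee v).2 * d.1.k + (ee v).2 * d.1.p (ee u).1
                + (ee u).2 * d.1.q (ee v).1) := rfl
        rw [h5, hsym]
        simp only [Submodule.coe_add, SetLike.val_smul]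
        try module
      · refine LinearMap.ext fun u => LinearMap.ext fun v => ?_
        rw [hFbr]
        have hu := (heeSym u).symm
        have hv := (heeSym v).symm
        have h := (hsub (ee u).1 (ee v).1 (ee u).2 (ee v).2).2
        rw [← hu, ← hv] at h
        rw [h]
        have h5 : fbr brk d.1 (ee u) (ee v)
            = (brk (ee u).1 (ee v).1 + (ee u).2 • d.1.D (ee v).1 - (ee v).2 • d.1.D (ee u).1,
               (ee u).2 * d.1.eta (ee v).1 - (ee v).2 * d.1.eta (ee u).1) := rfl
        rw [h5, hsym]
        simp only [Submodule.coe_add, Submodule.coe_sub, SetLike.val_smul]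
        try module
    rw [hFs]

end GDExt
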